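/- Let p be a prime, let R = ℤ[X]/(Φ_p(X)) where Φ_p is the p-th cyclotomic polynomial, let ζ ∈ R be the image of X, and let 𝔪 = (1 - ζ). Then the image of 1 - ζ in the quotient ring R/𝔪^{p+1} has additive order exactly p²: that is, p·(1-ζ) ∉ 𝔪^{p+1} but p²·(1-ζ) ∈ 𝔪^{p+1}. -/

import Mathlib

set_option maxHeartbeats 1000000
set_option synthInstance.maxHeartbeats 400000


/-- The ring `ℤ[X]/(Φ_p(X))`, i.e. the ring of integers `ℤ[ζ_p]` of the `p`-th
cyclotomic field. -/
abbrev cycIntRing (p : ℕ) : Type :=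
  Polynomial ℤ ⧸ Ideal.span {Polynomial.cyclotomic p ℤ}

/-- The primitive `p`-th root of unity `ζ`, the image of `X` in `ℤ[X]/(Φ_p(X))`. -/
noncomputable def zetaCyc (p : ℕ) : cycIntRing p :=
  Ideal.Quotient.mk (Ideal.span {Polynomial.cyclotomic p ℤ}) Polynomial.X

/-- The ideal `𝔪 = (1 - ζ)` of `ℤ[ζ_p]`. -/
noncomputable def mCyc (p : ℕ) : Ideal (cycIntRing p) :=
  Ideal.span {1 - zetaCyc p}

/-- the image of `1 - ζ` in `ℤ[ζ_p]/𝔪^{p+1}` has additive order exactly `p²`;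
that is, `p·(1 - ζ) ∉ 𝔪^{p+1}` but `p²·(1 - ζ) ∈ 𝔪^{p+1}`. -/
theorem addOrderOf_one_sub_zeta (p : ℕ) (hp : p.Prime) :
    addOrderOf (Ideal.Quotient.mk (mCyc p ^ (p + 1)) (1 - zetaCyc p)) = p ^ 2 ∧
    (p : cycIntRing p) * (1 - zetaCyc p) ∉ mCyc p ^ (p + 1) ∧
    (p : cycIntRing p) ^ 2 * (1 - zetaCyc p) ∈ mCyc p ^ (p + 1) := by
  haveI : Fact p.Prime := ⟨hp⟩
  have hirr : Irreducible (Polynomial.cyclotomic p ℤ) := Polynomial.cyclotomic.irreducible hp.pos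
  haveI hIp : (Ideal.span {Polynomial.cyclotomic p ℤ}).IsPrime :=
    (Ideal.span_singleton_prime hirr.ne_zero).mpr hirr.prime
  haveI : IsDomain (cycIntRing p) := Ideal.Quotient.isDomain _
  -- `aeval ζ f = mk f`
  have hmk : ∀ f : Polynomial ℤ, Polynomial.aeval (zetaCyc p) f
      = Ideal.Quotient.mk (Ideal.span {Polynomial.cyclotomic p ℤ}) f := by
    intro f
    have := Polynomial.aeval_algHom_apply
      (Ideal.Quotient.mkₐ ℤ (Ideal.span {Polynomial.cyclotomic p ℤ})) Polynomial.X f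
    simpa [zetaCyc, Polynomial.aeval_X_left_apply] using this
  -- characteristic zero, via a map to ℂ
  obtain ⟨μ, hμ⟩ : ∃ μ : ℂ, IsPrimitiveRoot μ p := ⟨_, Complex.isPrimitiveRoot_exp p hp.ne_zero⟩
  have hker : ∀ f ∈ Ideal.span {Polynomial.cyclotomic p ℤ},
      (Polynomial.aeval μ).toRingHom f = 0 := by
    intro f hf
    rw [Ideal.mem_span_singleton] at hf
    obtain ⟨g, rfl⟩ := hf
    have h0 : Polynomial.aeval μ (Polynomial.cyclotomic p ℤ) = 0 := by
      rw [Polynomial.aeval_def, ← Polynomial.eval_map, Polynomial.map_cyclotomic]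
      exact hμ.isRoot_cyclotomic hp.pos
    simp [h0]
  let φ : cycIntRing p →+* ℂ := Ideal.Quotient.lift _ _ hker
  haveI : CharZero (cycIntRing p) := ⟨fun a b h => by
    have h2 := congrArg φ h
    rw [map_natCast, map_natCast] at h2
    exact Nat.cast_injective h2⟩
  haveI : NeZero ((p : cycIntRing p)) := ⟨Nat.cast_ne_zero.mpr hp.ne_zero⟩
  -- ζ is a primitive p-th root of unity
  have hroot : (Polynomial.cyclotomic p (cycIntRing p)).IsRoot (zetaCyc p) := by
    rw [Polynomial.IsRoot, ← Polynomial.map_cyclotomic p (Int.castRingHom (cycIntRing p)),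
      Polynomial.eval_map, ← algebraMap_int_eq, ← Polynomial.aeval_def]
    exact (hmk _).trans (Ideal.Quotient.eq_zero_iff_mem.mpr (Ideal.subset_span rfl))
  have hζ : IsPrimitiveRoot (zetaCyc p) p := Polynomial.isRoot_cyclotomic_iff.mp hroot
  -- π = 1 - ζ is nonzero and not a unit
  set π : cycIntRing p := 1 - zetaCyc p with hπdef
  have hπ0 : π ≠ 0 := by
    intro h
    have hζ1 : zetaCyc p = 1 := (sub_eq_zero.mp h).symm
    have : p ∣ 1 := hζ.dvd_of_pow_eq_one 1 (by simp [hζ1])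
    exact hp.one_lt.ne' (Nat.dvd_one.mp this)
  have hπu : ¬ IsUnit π := by
    intro h
    have hkerψ : ∀ f ∈ Ideal.span {Polynomial.cyclotomic p ℤ},
        Polynomial.eval₂RingHom (Int.castRingHom (ZMod p)) 1 f = 0 := by
      intro f hf
      rw [Ideal.mem_span_singleton] at hf
      obtain ⟨g, rfl⟩ := hf
      have h0 : Polynomial.eval₂ (Int.castRingHom (ZMod p)) 1 (Polynomial.cyclotomic p ℤ) = 0 := by
        rw [Polynomial.eval₂_at_one, Polynomial.eval_one_cyclotomic_prime]
        simp
      simp only [Polynomial.coe_eval₂RingHom, Polynomial.eval₂_mul, h0, zero_mul]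
    set ψ : cycIntRing p →+* ZMod p := Ideal.Quotient.lift _ _ hkerψ with hψdef
    have hζψ : ψ (zetaCyc p) = 1 := by
      simp [hψdef, zetaCyc, Ideal.Quotient.lift_mk]
    have hψπ : ψ π = 0 := by
      rw [hπdef, map_sub, map_one, hζψ, sub_self]
    have h2 := h.map ψ
    rw [hψπ] at h2
    exact zero_ne_one (isUnit_zero_iff.mp h2)
  obtain ⟨n, rfl⟩ : ∃ n, p = n + 1 := ⟨p - 1, (Nat.succ_pred_eq_of_pos hp.pos).symm⟩
  have hn1 : 1 ≤ n := by
    rcases Nat.eq_zero_or_pos n with h | h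
    · rw [h] at hp; exact absurd rfl hp.one_lt.ne'
    · exact h
  -- p is associated to π^n
  have hassoc : Associated (π ^ n) (((n + 1 : ℕ) : cycIntRing (n + 1))) := by
    have h1 : ∀ k ∈ Finset.range n, Associated π (1 - zetaCyc (n + 1) ^ (k + 1)) := by
      intro k hk
      apply associated_of_dvd_dvd
      · have := sub_dvd_pow_sub_pow (1 : cycIntRing (n + 1)) (zetaCyc (n + 1)) (k + 1)
        simpa [hπdef] using this
      · have hklt : k + 1 < n + 1 := Nat.succ_lt_succ (Finset.mem_range.mp hk)
        have hcop : Nat.Coprime (k + 1) (n + 1) :=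
          (hp.coprime_iff_not_dvd.mpr (Nat.not_dvd_of_pos_of_lt (Nat.succ_pos k) hklt)).symm
        obtain ⟨m, -, hm⟩ := Nat.exists_mul_mod_eq_one_of_coprime hcop hp.one_lt
        have hpow : (zetaCyc (n + 1) ^ (k + 1)) ^ m = zetaCyc (n + 1) := by
          rw [← pow_mul, pow_eq_pow_mod ((k + 1) * m) hζ.pow_eq_one, hm, pow_one]
        have := sub_dvd_pow_sub_pow (1 : cycIntRing (n + 1)) (zetaCyc (n + 1) ^ (k + 1)) m
        rw [one_pow, hpow] at this
        exact this
    have h2 : Associated (∏ _k ∈ Finset.range n, π)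
        (∏ k ∈ Finset.range n, (1 - zetaCyc (n + 1) ^ (k + 1))) :=
      Associated.prod _ _ _ h1
    rw [Finset.prod_const, Finset.card_range, hζ.prod_one_sub_pow_eq_order] at h2
    convert h2 using 2
    push_cast
    ring
  obtain ⟨u, hu⟩ := hassoc
  -- the ideal `𝔪 ^ (p+1)` is `span {π ^ (n+2)}`
  have hJ : mCyc (n + 1) ^ (n + 1 + 1) =
      Ideal.span {π ^ (n + 2)} := by
    rw [mCyc, ← hπdef, Ideal.span_singleton_pow]
  have hnotmem : ((n + 1 : ℕ) : cycIntRing (n + 1)) * π ∉ mCyc (n + 1) ^ (n + 1 + 1) := by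
    rw [hJ, Ideal.mem_span_singleton]
    intro hdvd
    obtain ⟨c, hc⟩ := hdvd
    rw [← hu] at hc
    have hc' : π ^ (n + 1) * (u : cycIntRing (n + 1)) = π ^ (n + 1) * (π * c) := by
      linear_combination hc
    have : (u : cycIntRing (n + 1)) = π * c := mul_left_cancel₀ (pow_ne_zero _ hπ0) hc'
    exact hπu (isUnit_of_dvd_unit ⟨c, this⟩ u.isUnit)
  have hmem : ((n + 1 : ℕ) : cycIntRing (n + 1)) ^ 2 * π ∈ mCyc (n + 1) ^ (n + 1 + 1) := by
    rw [hJ, Ideal.mem_span_singleton, ← hu]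
    have heq : (π ^ n * (u : cycIntRing (n + 1))) ^ 2 * π
        = π ^ (2 * n + 1) * ((u : cycIntRing (n + 1)) * u) := by ring
    rw [heq]
    exact Dvd.dvd.mul_right (pow_dvd_pow π (by omega)) _
  refine ⟨?_, hnotmem, hmem⟩
  have hcast : ∀ k : ℕ, (k • (Ideal.Quotient.mk (mCyc (n + 1) ^ (n + 1 + 1)) π)) =
      Ideal.Quotient.mk (mCyc (n + 1) ^ (n + 1 + 1)) ((k : cycIntRing (n + 1)) * π) := by
    intro k
    rw [map_mul, map_natCast]
    exact nsmul_eq_mul k (Ideal.Quotient.mk (mCyc (n + 1) ^ (n + 1 + 1)) π)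
  have h2 : (n + 1) ^ 2 • (Ideal.Quotient.mk (mCyc (n + 1) ^ (n + 1 + 1)) π) = 0 := by
    rw [hcast, Ideal.Quotient.eq_zero_iff_mem, Nat.cast_pow]
    exact hmem
  have h1 : ¬ (n + 1) ^ 1 • (Ideal.Quotient.mk (mCyc (n + 1) ^ (n + 1 + 1)) π) = 0 := by
    rw [pow_one, hcast, Ideal.Quotient.eq_zero_iff_mem]
    exact hnotmem
  exact addOrderOf_eq_prime_pow h1 h2
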